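/- Let ω ∈ 𝕋 with associated data (I, J, L, L′, M, M′, σ), let ς be the (I∪L′)×(J∪M) matrix with ς_{i,j} = 1 if j ∈ J and i = σ(j) and ς_{i,j} = 0 otherwise, and let Γ be the space of complex matrices γ indexed by (J∪M)×(I∪L′) such that both products ςγ (indexed by (I∪L′)×(I∪L′)) and γς (indexed by (J∪M)×(J∪M)) are strictly upper triangular with respect to the natural integer order on the index sets. Let η₁(γ) be the q×p matrix extending γ by zero, and let τ be the p×q matrix with τ_{i,j} = 1 if j ∈ J and i = σ(j), else 0. Then η₁ restricts to a linear bijection from Γ onto the set C = {c ∈ Mat_{q×p}(ℂ) : there exist a, b, d such that (a b; c d) ∈ D_ω}. Moreover, for every γ ∈ Γ with c = η₁(γ) and every ℓ ≥ 0, η₁((γς)^ℓ γ) = (c τ)^ℓ c. -/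

import Mathlib

open scoped Classical
open Matrix

noncomputable section

/-- A partial permutation matrix: entries in `{0,1}`, at most one `1` in each row
and in each column. -/
def IsPartialPerm {m n : ℕ} (τ : Matrix (Fin m) (Fin n) ℂ) : Prop :=
  (∀ i j, τ i j = 0 ∨ τ i j = 1) ∧
  (∀ i j j', τ i j = 1 → τ i j' = 1 → j = j') ∧
  (∀ i i' j, τ i j = 1 → τ i' j = 1 → i = i')

/-- `(p+q) × r` complex matrices, rows indexed by `Fin p ⊕ Fin q`. -/
abbrev MatT (p q r : ℕ) := Matrix (Fin p ⊕ Fin q) (Fin r) ℂ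

/-- The set `𝕋`: `(p+q) × r` matrices of rank `r` whose top `p × r` and bottom
`q × r` blocks are partial permutation matrices. -/
def InT {p q r : ℕ} (ω : MatT p q r) : Prop :=
  ω.rank = r ∧
  IsPartialPerm (Matrix.of fun (i : Fin p) (c : Fin r) => ω (Sum.inl i) c) ∧
  IsPartialPerm (Matrix.of fun (j : Fin q) (c : Fin r) => ω (Sum.inr j) c)

/-- The permutation matrix of `w`: `(P_w)_{i,j} = 1` iff `i = w j`. -/
def permMat {r : ℕ} (w : Equiv.Perm (Fin r)) : Matrix (Fin r) (Fin r) ℂ :=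
  Matrix.of fun i j => if i = w j then 1 else 0

/-- `[ω]`, the column space of `ω`, as a subspace of `ℂ^{p+q}`. -/
def colSpace {p q r : ℕ} (ω : MatT p q r) : Submodule ℂ (Fin p ⊕ Fin q → ℂ) :=
  LinearMap.range ω.mulVecLin

/-- `i ∈ I`: some column of `ω` has a `1` in row `i` (top block) and a `1` in some
bottom row. -/
def memI {p q r : ℕ} (ω : MatT p q r) (i : Fin p) : Prop :=
  ∃ c, ω (Sum.inl i) c = 1 ∧ ∃ j : Fin q, ω (Sum.inr j) c = 1

/-- `i ∈ L`: some column of `ω` has a `1` in row `i` (top block) and no other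
nonzero entry. -/
def memL {p q r : ℕ} (ω : MatT p q r) (i : Fin p) : Prop :=
  ∃ c, ω (Sum.inl i) c = 1 ∧ ∀ k, k ≠ Sum.inl i → ω k c = 0

/-- `i ∈ L'`: row `i` of the top block is zero. -/
def memL' {p q r : ℕ} (ω : MatT p q r) (i : Fin p) : Prop :=
  ∀ c, ω (Sum.inl i) c = 0

/-- `j ∈ J`: some column of `ω` has a `1` in row `p+j` and a `1` in some top row. -/
def memJ {p q r : ℕ} (ω : MatT p q r) (j : Fin q) : Prop :=
  ∃ c, ω (Sum.inr j) c = 1 ∧ ∃ i : Fin p, ω (Sum.inl i) c = 1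

/-- `j ∈ M`: some column of `ω` has a `1` in row `p+j` and no other nonzero entry. -/
def memM {p q r : ℕ} (ω : MatT p q r) (j : Fin q) : Prop :=
  ∃ c, ω (Sum.inr j) c = 1 ∧ ∀ k, k ≠ Sum.inr j → ω k c = 0

/-- `j ∈ M'`: row `p+j` of `ω` (i.e. row `j` of the bottom block) is zero. -/
def memM' {p q r : ℕ} (ω : MatT p q r) (j : Fin q) : Prop :=
  ∀ c, ω (Sum.inr j) c = 0

/-- The conormal direction `D_ω`: block matrices `(a b; c d)` with `a, d` strictly
upper triangular, column space contained in `[ω]`, and `[ω]` contained in the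
kernel. -/
def Dset {p q r : ℕ} (ω : MatT p q r) :
    Set (Matrix (Fin p ⊕ Fin q) (Fin p ⊕ Fin q) ℂ) :=
  {x | (∀ i j : Fin p, j ≤ i → x (Sum.inl i) (Sum.inl j) = 0) ∧
       (∀ i j : Fin q, j ≤ i → x (Sum.inr i) (Sum.inr j) = 0) ∧
       LinearMap.range x.mulVecLin ≤ colSpace ω ∧
       colSpace ω ≤ LinearMap.ker x.mulVecLin}

/-- The `p × q` matrix `τ` with `τ_{i,j} = 1` iff `j ∈ J` and `i = σ(j)`. -/
def tauMat {p q r : ℕ} (ω : MatT p q r) (σ : Fin q → Fin p) :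
    Matrix (Fin p) (Fin q) ℂ :=
  Matrix.of fun i j => if memJ ω j ∧ i = σ j then 1 else 0

/-- The index set `I ∪ L'` (as a subtype of `Fin p`). -/
def IUL' {p q r : ℕ} (ω : MatT p q r) := {i : Fin p // memI ω i ∨ memL' ω i}

/-- The index set `J ∪ M` (as a subtype of `Fin q`). -/
def JUM {p q r : ℕ} (ω : MatT p q r) := {j : Fin q // memJ ω j ∨ memM ω j}

instance {p q r : ℕ} (ω : MatT p q r) : Finite (IUL' ω) := by
  unfold IUL'; infer_instance

instance {p q r : ℕ} (ω : MatT p q r) : Finite (JUM ω) := by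
  unfold JUM; infer_instance

noncomputable instance {p q r : ℕ} (ω : MatT p q r) : Fintype (IUL' ω) :=
  Fintype.ofFinite _

noncomputable instance {p q r : ℕ} (ω : MatT p q r) : Fintype (JUM ω) :=
  Fintype.ofFinite _

instance {p q r : ℕ} (ω : MatT p q r) : DecidableEq (IUL' ω) := by
  unfold IUL'; infer_instance

instance {p q r : ℕ} (ω : MatT p q r) : DecidableEq (JUM ω) := by
  unfold JUM; infer_instance

/-- The matrix `ς`, indexed by `(I∪L') × (J∪M)`, with `ς_{i,j} = 1` iff `j ∈ J`
and `i = σ(j)`. -/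
def sigMat {p q r : ℕ} (ω : MatT p q r) (σ : Fin q → Fin p) :
    Matrix (IUL' ω) (JUM ω) ℂ :=
  Matrix.of fun i j => if memJ ω j.1 ∧ i.1 = σ j.1 then 1 else 0

/-- The space `Γ`: matrices `γ` indexed by `(J∪M) × (I∪L')` such that `ςγ` and
`γς` are strictly upper triangular for the natural integer order. -/
def GammaSet {p q r : ℕ} (ω : MatT p q r) (σ : Fin q → Fin p) :
    Set (Matrix (JUM ω) (IUL' ω) ℂ) :=
  {γ | (∀ i i' : IUL' ω, i'.1 ≤ i.1 → (sigMat ω σ * γ) i i' = 0) ∧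
       (∀ j j' : JUM ω, j'.1 ≤ j.1 → (γ * sigMat ω σ) j j' = 0)}

/-- The extension-by-zero map `η₁` from `(J∪M) × (I∪L')`-matrices to `q × p`
matrices. -/
def eta1 {p q r : ℕ} (ω : MatT p q r) (γ : Matrix (JUM ω) (IUL' ω) ℂ) :
    Matrix (Fin q) (Fin p) ℂ :=
  Matrix.of fun j i =>
    if h : (memJ ω j ∨ memM ω j) ∧ (memI ω i ∨ memL' ω i)
    then γ ⟨j, h.1⟩ ⟨i, h.2⟩ else 0

section Aux14

variable {p q r : ℕ}

/-- Sum over `Fin q` of a function vanishing off `J ∪ M` equals the sum over the subtype. -/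
lemma sumJUM (ω : MatT p q r) (f : Fin q → ℂ)
    (hf : ∀ j, ¬(memJ ω j ∨ memM ω j) → f j = 0) :
    (∑ j, f j) = ∑ j : JUM ω, f j.1 := by
  classical
  have h1 : (∑ j, f j)
      = ∑ j ∈ Finset.univ.filter (fun j => memJ ω j ∨ memM ω j), f j :=
    (Finset.sum_filter_of_ne (fun x _ hx => by by_contra h; exact hx (hf x h))).symm
  have h2 : (∑ j ∈ Finset.univ.filter (fun j => memJ ω j ∨ memM ω j), f j)
      = ∑ a : {j : Fin q // memJ ω j ∨ memM ω j}, f a.1 :=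
    Finset.sum_subtype _ (fun x => by simp) f
  rw [h1, h2]
  unfold JUM
  congr 1
  ext x
  simp
  exact @Finset.mem_univ (JUM ω) (instFintypeJUM ω) x

lemma sumIUL' (ω : MatT p q r) (f : Fin p → ℂ)
    (hf : ∀ i, ¬(memI ω i ∨ memL' ω i) → f i = 0) :
    (∑ i, f i) = ∑ i : IUL' ω, f i.1 := by
  classical
  have h1 : (∑ i, f i)
      = ∑ i ∈ Finset.univ.filter (fun i => memI ω i ∨ memL' ω i), f i :=
    (Finset.sum_filter_of_ne (fun x _ hx => by by_contra h; exact hx (hf x h))).symm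
  have h2 : (∑ i ∈ Finset.univ.filter (fun i => memI ω i ∨ memL' ω i), f i)
      = ∑ a : {i : Fin p // memI ω i ∨ memL' ω i}, f a.1 :=
    Finset.sum_subtype _ (fun x => by simp) f
  rw [h1, h2]
  unfold IUL'
  congr 1
  ext x
  simp
  exact @Finset.mem_univ (IUL' ω) (instFintypeIUL' ω) x

end Aux14
section Aux14b

variable {p q r : ℕ} {ω : MatT p q r} {σ : Fin q → Fin p}

lemma top01 (hω : InT ω) (i : Fin p) (c : Fin r) :
    ω (Sum.inl i) c = 0 ∨ ω (Sum.inl i) c = 1 := hω.2.1.1 i c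

lemma bot01 (hω : InT ω) (j : Fin q) (c : Fin r) :
    ω (Sum.inr j) c = 0 ∨ ω (Sum.inr j) c = 1 := hω.2.2.1 j c

lemma top0 (hω : InT ω) {i : Fin p} {c : Fin r} (h : ω (Sum.inl i) c ≠ 1) :
    ω (Sum.inl i) c = 0 := (top01 hω i c).resolve_right h

lemma bot0 (hω : InT ω) {j : Fin q} {c : Fin r} (h : ω (Sum.inr j) c ≠ 1) :
    ω (Sum.inr j) c = 0 := (bot01 hω j c).resolve_right h

lemma rowUL (hω : InT ω) {i : Fin p} {c c' : Fin r}
    (h : ω (Sum.inl i) c = 1) (h' : ω (Sum.inl i) c' = 1) : c = c' :=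
  hω.2.1.2.1 i c c' h h'

lemma colUL (hω : InT ω) {i i' : Fin p} {c : Fin r}
    (h : ω (Sum.inl i) c = 1) (h' : ω (Sum.inl i') c = 1) : i = i' :=
  hω.2.1.2.2 i i' c h h'

lemma rowUR (hω : InT ω) {j : Fin q} {c c' : Fin r}
    (h : ω (Sum.inr j) c = 1) (h' : ω (Sum.inr j) c' = 1) : c = c' :=
  hω.2.2.2.1 j c c' h h'

lemma colUR (hω : InT ω) {j j' : Fin q} {c : Fin r}
    (h : ω (Sum.inr j) c = 1) (h' : ω (Sum.inr j') c = 1) : j = j' :=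
  hω.2.2.2.2 j j' c h h'

variable (hσ : ∀ j, memJ ω j → ∃ c, ω (Sum.inl (σ j)) c = 1 ∧ ω (Sum.inr j) c = 1)

include hσ in
lemma sigma_memI {j : Fin q} (hj : memJ ω j) : memI ω (σ j) := by
  obtain ⟨c, h1, h2⟩ := hσ j hj
  exact ⟨c, h1, j, h2⟩

include hσ in
lemma pair_col (hω : InT ω) {j : Fin q} (hj : memJ ω j) (c0 : Fin r) :
    ω (Sum.inl (σ j)) c0 = ω (Sum.inr j) c0 := by
  obtain ⟨c, h1, h2⟩ := hσ j hj
  by_cases hc : c0 = c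
  · rw [hc, h1, h2]
  · have ht : ω (Sum.inl (σ j)) c0 = 0 :=
      top0 hω (fun h => hc (rowUL hω h h1))
    have hb : ω (Sum.inr j) c0 = 0 :=
      bot0 hω (fun h => hc (rowUR hω h h2))
    rw [ht, hb]

include hσ in
lemma pair2 (hω : InT ω) {i : Fin p} {j : Fin q} {c0 : Fin r}
    (h1 : ω (Sum.inl i) c0 = 1) (h2 : ω (Sum.inr j) c0 = 1) :
    memJ ω j ∧ σ j = i := by
  have hj : memJ ω j := ⟨c0, h2, i, h1⟩
  refine ⟨hj, ?_⟩
  obtain ⟨c, hc1, hc2⟩ := hσ j hj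
  have : c0 = c := rowUR hω h2 hc2
  subst this
  exact (colUL hω h1 hc1).symm

include hσ in
lemma sigma_inj (hω : InT ω) {j j' : Fin q} (hj : memJ ω j) (hj' : memJ ω j')
    (h : σ j = σ j') : j = j' := by
  obtain ⟨c, h1, h2⟩ := hσ j hj
  obtain ⟨c', h1', h2'⟩ := hσ j' hj'
  rw [h] at h1
  have : c = c' := rowUL hω h1 h1'
  subst this
  exact colUR hω h2 h2'

include hσ in
lemma memI_sigma (hω : InT ω) {i : Fin p} (hi : memI ω i) :
    ∃ j, memJ ω j ∧ σ j = i := by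
  obtain ⟨c, h1, j, h2⟩ := hi
  exact ⟨j, pair2 hσ hω h1 h2⟩

lemma I_L'_disj {i : Fin p} (h1 : memI ω i) (h2 : memL' ω i) : False := by
  obtain ⟨c, hc, _⟩ := h1
  rw [h2 c] at hc
  exact zero_ne_one hc

lemma JM_M'_disj {j : Fin q} (h1 : memJ ω j ∨ memM ω j) (h2 : memM' ω j) : False := by
  rcases h1 with ⟨c, hc, _⟩ | ⟨c, hc, _⟩ <;> rw [h2 c] at hc <;> exact zero_ne_one hc

lemma trichoI (hω : InT ω) (i : Fin p) : memI ω i ∨ memL' ω i ∨ memL ω i := by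
  by_cases hL' : memL' ω i
  · exact Or.inr (Or.inl hL')
  · unfold memL' at hL'
    push_neg at hL'
    obtain ⟨c, hc⟩ := hL'
    have hc1 : ω (Sum.inl i) c = 1 := (top01 hω i c).resolve_left hc
    by_cases hJ : ∃ j : Fin q, ω (Sum.inr j) c = 1
    · exact Or.inl ⟨c, hc1, hJ⟩
    · push_neg at hJ
      refine Or.inr (Or.inr ⟨c, hc1, fun k hk => ?_⟩)
      rcases k with i' | j'
      · exact top0 hω (fun h => hk (by rw [colUL hω h hc1]))
      · exact bot0 hω (hJ j')

lemma trichoJ (hω : InT ω) (j : Fin q) : memJ ω j ∨ memM ω j ∨ memM' ω j := by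
  by_cases hM' : memM' ω j
  · exact Or.inr (Or.inr hM')
  · unfold memM' at hM'
    push_neg at hM'
    obtain ⟨c, hc⟩ := hM'
    have hc1 : ω (Sum.inr j) c = 1 := (bot01 hω j c).resolve_left hc
    by_cases hI : ∃ i : Fin p, ω (Sum.inl i) c = 1
    · exact Or.inl ⟨c, hc1, hI⟩
    · push_neg at hI
      refine Or.inr (Or.inl ⟨c, hc1, fun k hk => ?_⟩)
      rcases k with i' | j'
      · exact top0 hω (hI i')
      · exact bot0 hω (fun h => hk (by rw [colUR hω h hc1]))

end Aux14b
section Aux14c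

variable {p q r : ℕ} {ω : MatT p q r} {σ : Fin q → Fin p}
variable (hσ : ∀ j, memJ ω j → ∃ c, ω (Sum.inl (σ j)) c = 1 ∧ ω (Sum.inr j) c = 1)

include hσ in
lemma sumAB (hω : InT ω) (i : Fin p) (j : Fin q) :
    (∑ c0, ω (Sum.inl i) c0 * ω (Sum.inr j) c0) = tauMat ω σ i j := by
  rw [tauMat, Matrix.of_apply]
  split_ifs with h
  · obtain ⟨hj, rfl⟩ := h
    obtain ⟨c, h1, h2⟩ := hσ j hj
    rw [Finset.sum_eq_single c]
    · rw [h1, h2, one_mul]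
    · intro c0 _ hne
      rw [top0 hω (fun ht => hne (rowUL hω ht h1)), zero_mul]
    · exact fun hc => absurd (Finset.mem_univ c) hc
  · apply Finset.sum_eq_zero
    intro c0 _
    by_cases h1 : ω (Sum.inl i) c0 = 1
    · by_cases h2 : ω (Sum.inr j) c0 = 1
      · exact absurd ⟨(pair2 hσ hω h1 h2).1, (pair2 hσ hω h1 h2).2.symm⟩ h
      · rw [bot0 hω h2, mul_zero]
    · rw [top0 hω h1, zero_mul]

lemma sumBB (hω : InT ω) (j j' : Fin q) :
    (∑ c0, ω (Sum.inr j) c0 * ω (Sum.inr j') c0)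
      = if j = j' ∧ ¬ memM' ω j then 1 else 0 := by
  split_ifs with h
  · obtain ⟨rfl, hM⟩ := h
    unfold memM' at hM
    push_neg at hM
    obtain ⟨c, hc⟩ := hM
    have hc1 : ω (Sum.inr j) c = 1 := (bot01 hω j c).resolve_left hc
    rw [Finset.sum_eq_single c]
    · rw [hc1, one_mul]
    · intro c0 _ hne
      rw [bot0 hω (fun ht => hne (rowUR hω ht hc1)), zero_mul]
    · exact fun hc' => absurd (Finset.mem_univ c) hc'
  · apply Finset.sum_eq_zero
    intro c0 _
    by_cases h1 : ω (Sum.inr j) c0 = 1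
    · by_cases h2 : ω (Sum.inr j') c0 = 1
      · exact absurd ⟨colUR hω h1 h2, fun hM => zero_ne_one ((hM c0).symm.trans h1)⟩ h
      · rw [bot0 hω h2, mul_zero]
    · rw [bot0 hω h1, zero_mul]

include hσ in
lemma rowT (hω : InT ω) {i : Fin p} (hi : memI ω i ∨ memL' ω i) (c0 : Fin r) :
    ω (Sum.inl i) c0 = ∑ j', tauMat ω σ i j' * ω (Sum.inr j') c0 := by
  rcases hi with hi | hi
  · obtain ⟨j, hj, rfl⟩ := memI_sigma hσ hω hi
    rw [Finset.sum_eq_single j]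
    · rw [show tauMat ω σ (σ j) j = 1 from if_pos ⟨hj, rfl⟩, one_mul]
      exact pair_col hσ hω hj c0
    · intro j'' _ hne
      have : tauMat ω σ (σ j) j'' = 0 := by
        rw [tauMat, Matrix.of_apply, if_neg]
        rintro ⟨hj'', he⟩
        exact hne (sigma_inj hσ hω hj'' hj he.symm)
      rw [this, zero_mul]
    · exact fun hj' => absurd (Finset.mem_univ j) hj'
  · rw [hi c0]
    symm
    apply Finset.sum_eq_zero
    intro j'' _
    have : tauMat ω σ i j'' = 0 := by
      rw [tauMat, Matrix.of_apply, if_neg]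
      rintro ⟨hj'', rfl⟩
      exact I_L'_disj (sigma_memI hσ hj'') hi
    rw [this, zero_mul]

end Aux14c
/-- Extension by zero for `(I∪L')×(I∪L')` matrices. -/
def eta0 {p q r : ℕ} (ω : MatT p q r) (δ : Matrix (IUL' ω) (IUL' ω) ℂ) :
    Matrix (Fin p) (Fin p) ℂ :=
  Matrix.of fun i i' =>
    if h : (memI ω i ∨ memL' ω i) ∧ (memI ω i' ∨ memL' ω i')
    then δ ⟨i, h.1⟩ ⟨i', h.2⟩ else 0

/-- Extension by zero for `(J∪M)×(J∪M)` matrices. -/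
def eta2 {p q r : ℕ} (ω : MatT p q r) (δ : Matrix (JUM ω) (JUM ω) ℂ) :
    Matrix (Fin q) (Fin q) ℂ :=
  Matrix.of fun j j' =>
    if h : (memJ ω j ∨ memM ω j) ∧ (memJ ω j' ∨ memM ω j')
    then δ ⟨j, h.1⟩ ⟨j', h.2⟩ else 0

section Aux14d

variable {p q r : ℕ} {ω : MatT p q r} {σ : Fin q → Fin p}

lemma eta1_pos (γ : Matrix (JUM ω) (IUL' ω) ℂ) {j i}
    (hj : memJ ω j ∨ memM ω j) (hi : memI ω i ∨ memL' ω i) :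
    eta1 ω γ j i = γ ⟨j, hj⟩ ⟨i, hi⟩ := dif_pos ⟨hj, hi⟩

lemma eta1_neg (γ : Matrix (JUM ω) (IUL' ω) ℂ) {j i}
    (h : ¬((memJ ω j ∨ memM ω j) ∧ (memI ω i ∨ memL' ω i))) :
    eta1 ω γ j i = 0 := dif_neg h

lemma eta0_pos (δ : Matrix (IUL' ω) (IUL' ω) ℂ) {i i'}
    (hi : memI ω i ∨ memL' ω i) (hi' : memI ω i' ∨ memL' ω i') :
    eta0 ω δ i i' = δ ⟨i, hi⟩ ⟨i', hi'⟩ := dif_pos ⟨hi, hi'⟩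

lemma eta0_neg (δ : Matrix (IUL' ω) (IUL' ω) ℂ) {i i'}
    (h : ¬((memI ω i ∨ memL' ω i) ∧ (memI ω i' ∨ memL' ω i'))) :
    eta0 ω δ i i' = 0 := dif_neg h

lemma eta2_pos (δ : Matrix (JUM ω) (JUM ω) ℂ) {j j'}
    (hj : memJ ω j ∨ memM ω j) (hj' : memJ ω j' ∨ memM ω j') :
    eta2 ω δ j j' = δ ⟨j, hj⟩ ⟨j', hj'⟩ := dif_pos ⟨hj, hj'⟩

lemma eta2_neg (δ : Matrix (JUM ω) (JUM ω) ℂ) {j j'}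
    (h : ¬((memJ ω j ∨ memM ω j) ∧ (memJ ω j' ∨ memM ω j'))) :
    eta2 ω δ j j' = 0 := dif_neg h

variable (hσ : ∀ j, memJ ω j → ∃ c, ω (Sum.inl (σ j)) c = 1 ∧ ω (Sum.inr j) c = 1)

lemma lemE3 (δ : Matrix (JUM ω) (JUM ω) ℂ) (γ : Matrix (JUM ω) (IUL' ω) ℂ) :
    eta2 ω δ * eta1 ω γ = eta1 ω (δ * γ) := by
  ext j i
  rw [Matrix.mul_apply]
  by_cases hj : memJ ω j ∨ memM ω j
  · by_cases hi : memI ω i ∨ memL' ω i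
    · rw [eta1_pos _ hj hi]
      erw [Matrix.mul_apply]
      rw [sumJUM ω _ (fun j' hj' => by
        rw [eta2_neg _ (fun h => hj' h.2), zero_mul])]
      apply Finset.sum_congr rfl
      intro j' _
      rw [eta2_pos _ hj j'.2, eta1_pos _ j'.2 hi]
      rfl
    · rw [eta1_neg _ (fun h => hi h.2)]
      apply Finset.sum_eq_zero
      intro j' _
      rw [eta1_neg _ (fun h => hi h.2), mul_zero]
  · rw [eta1_neg _ (fun h => hj h.1)]
    apply Finset.sum_eq_zero
    intro j' _
    rw [eta2_neg _ (fun h => hj h.1), zero_mul]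

include hσ in
lemma lemE2 (hω : InT ω) (γ : Matrix (JUM ω) (IUL' ω) ℂ) :
    eta1 ω γ * tauMat ω σ = eta2 ω (γ * sigMat ω σ) := by
  ext j j'
  rw [Matrix.mul_apply]
  by_cases hj' : memJ ω j'
  · have hσI : memI ω (σ j') := sigma_memI hσ hj'
    rw [Finset.sum_eq_single (σ j')]
    · rw [show tauMat ω σ (σ j') j' = 1 from if_pos ⟨hj', rfl⟩, mul_one]
      by_cases hj : memJ ω j ∨ memM ω j
      · rw [eta1_pos _ hj (Or.inl hσI), eta2_pos _ hj (Or.inl hj')]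
        erw [Matrix.mul_apply]
        rw [Finset.sum_eq_single (ι := IUL' ω) ⟨σ j', Or.inl hσI⟩]
        · rw [show sigMat ω σ ⟨σ j', Or.inl hσI⟩ ⟨j', Or.inl hj'⟩ = 1 from
            if_pos ⟨hj', rfl⟩, mul_one]
        · intro i'' _ hne
          rw [show sigMat ω σ i'' ⟨j', Or.inl hj'⟩ = 0 from
            if_neg (fun h => hne (Subtype.ext h.2)), mul_zero]
        · exact fun h => absurd (Finset.mem_univ _) h
      · rw [eta1_neg _ (fun h => hj h.1), eta2_neg _ (fun h => hj h.1)]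
    · intro i _ hne
      rw [show tauMat ω σ i j' = 0 from if_neg (fun h => hne h.2), mul_zero]
    · exact fun h => absurd (Finset.mem_univ _) h
  · rw [Finset.sum_eq_zero (fun i _ => by
      rw [show tauMat ω σ i j' = 0 from if_neg (fun h => hj' h.1), mul_zero])]
    by_cases h : (memJ ω j ∨ memM ω j) ∧ (memJ ω j' ∨ memM ω j')
    · rw [eta2_pos _ h.1 h.2]
      erw [Matrix.mul_apply]
      symm
      apply Finset.sum_eq_zero
      intro i'' _
      rw [show sigMat ω σ i'' ⟨j', h.2⟩ = 0 from if_neg (fun hh => hj' hh.1), mul_zero]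
    · rw [eta2_neg _ h]

include hσ in
lemma lemE1 (hω : InT ω) (γ : Matrix (JUM ω) (IUL' ω) ℂ) :
    tauMat ω σ * eta1 ω γ = eta0 ω (sigMat ω σ * γ) := by
  ext i i'
  rw [Matrix.mul_apply]
  by_cases hex : ∃ j0, memJ ω j0 ∧ σ j0 = i
  · obtain ⟨j0, hj0, hji⟩ := hex
    have hiI : memI ω i := hji ▸ sigma_memI hσ hj0
    rw [Finset.sum_eq_single j0]
    · rw [show tauMat ω σ i j0 = 1 from if_pos ⟨hj0, hji.symm⟩, one_mul]
      by_cases hi' : memI ω i' ∨ memL' ω i'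
      · rw [eta1_pos _ (Or.inl hj0) hi', eta0_pos _ (Or.inl hiI) hi']
        erw [Matrix.mul_apply]
        rw [Finset.sum_eq_single (ι := JUM ω) ⟨j0, Or.inl hj0⟩]
        · rw [show sigMat ω σ ⟨i, Or.inl hiI⟩ ⟨j0, Or.inl hj0⟩ = 1 from
            if_pos ⟨hj0, hji.symm⟩, one_mul]
        · intro j'' _ hne
          rw [show sigMat ω σ ⟨i, Or.inl hiI⟩ j'' = 0 from
            if_neg (fun h => hne (Subtype.ext
              (sigma_inj hσ hω h.1 hj0 (h.2.symm.trans hji.symm)))), zero_mul]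
        · exact fun h => absurd (Finset.mem_univ _) h
      · rw [eta1_neg _ (fun h => hi' h.2), eta0_neg _ (fun h => hi' h.2)]
    · intro j'' _ hne
      rw [show tauMat ω σ i j'' = 0 from
        if_neg (fun h => hne (sigma_inj hσ hω h.1 hj0 (h.2.symm.trans hji.symm))), zero_mul]
    · exact fun h => absurd (Finset.mem_univ _) h
  · rw [Finset.sum_eq_zero (fun j _ => by
      rw [show tauMat ω σ i j = 0 from
        if_neg (fun h => hex ⟨j, h.1, h.2.symm⟩), zero_mul])]
    by_cases h : (memI ω i ∨ memL' ω i) ∧ (memI ω i' ∨ memL' ω i')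
    · rw [eta0_pos _ h.1 h.2]
      erw [Matrix.mul_apply]
      symm
      apply Finset.sum_eq_zero
      intro j'' _
      rw [show sigMat ω σ ⟨i, h.1⟩ j'' = 0 from
        if_neg (fun hh => hex ⟨j''.1, hh.1, hh.2.symm⟩), zero_mul]
    · rw [eta0_neg _ h]

end Aux14d
/-- The canonical element of `D_ω` with lower-left block `c`. -/
def Xmat {p q r : ℕ} (ω : MatT p q r) (σ : Fin q → Fin p)
    (c : Matrix (Fin q) (Fin p) ℂ) :
    Matrix (Fin p ⊕ Fin q) (Fin p ⊕ Fin q) ℂ :=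
  Matrix.fromBlocks (tauMat ω σ * c) (-(tauMat ω σ * c * tauMat ω σ))
    c (-(c * tauMat ω σ))

section Aux14e

variable {p q r : ℕ} {ω : MatT p q r} {σ : Fin q → Fin p}
variable (hσ : ∀ j, memJ ω j → ∃ c, ω (Sum.inl (σ j)) c = 1 ∧ ω (Sum.inr j) c = 1)

lemma Xmat_top (c : Matrix (Fin q) (Fin p) ℂ) (i : Fin p) (k' : Fin p ⊕ Fin q) :
    Xmat ω σ c (Sum.inl i) k' = ∑ j, tauMat ω σ i j * Xmat ω σ c (Sum.inr j) k' := by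
  rcases k' with i' | j'
  · show (tauMat ω σ * c) i i' = _
    rw [Matrix.mul_apply]
    rfl
  · show (-(tauMat ω σ * c * tauMat ω σ)) i j' = _
    rw [Matrix.neg_apply, Matrix.mul_assoc, Matrix.mul_apply, ← Finset.sum_neg_distrib]
    apply Finset.sum_congr rfl
    intro j _
    rw [← mul_neg]
    rfl

lemma Xmat_bot0 (c : Matrix (Fin q) (Fin p) ℂ)
    (hrow : ∀ j, ¬(memJ ω j ∨ memM ω j) → ∀ i, c j i = 0)
    {j0 : Fin q} (h : ¬(memJ ω j0 ∨ memM ω j0)) (k' : Fin p ⊕ Fin q) :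
    Xmat ω σ c (Sum.inr j0) k' = 0 := by
  rcases k' with i' | j'
  · exact hrow j0 h i'
  · show (-(c * tauMat ω σ)) j0 j' = 0
    rw [Matrix.neg_apply, Matrix.mul_apply, Finset.sum_eq_zero, neg_zero]
    intro i _
    rw [hrow j0 h i, zero_mul]

include hσ in
lemma Xmat_range (hω : InT ω) (c : Matrix (Fin q) (Fin p) ℂ)
    (hrow : ∀ j, ¬(memJ ω j ∨ memM ω j) → ∀ i, c j i = 0) :
    ∃ y : Matrix (Fin r) (Fin p ⊕ Fin q) ℂ, ω * y = Xmat ω σ c := by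
  refine ⟨Matrix.of fun c0 k => ∑ j, ω (Sum.inr j) c0 * Xmat ω σ c (Sum.inr j) k, ?_⟩
  ext k k'
  rw [Matrix.mul_apply]
  have step : ∀ k : Fin p ⊕ Fin q,
      (∑ c0, ω k c0 * (∑ j, ω (Sum.inr j) c0 * Xmat ω σ c (Sum.inr j) k'))
        = ∑ j, (∑ c0, ω k c0 * ω (Sum.inr j) c0) * Xmat ω σ c (Sum.inr j) k' := by
    intro k
    simp_rw [Finset.mul_sum]
    rw [Finset.sum_comm]
    simp_rw [← mul_assoc, ← Finset.sum_mul]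
  rcases k with i | j0
  · rw [show (∑ c0, ω (Sum.inl i) c0 *
        (Matrix.of fun c0 k => ∑ j, ω (Sum.inr j) c0 * Xmat ω σ c (Sum.inr j) k) c0 k')
        = ∑ j, (∑ c0, ω (Sum.inl i) c0 * ω (Sum.inr j) c0) * Xmat ω σ c (Sum.inr j) k'
        from step (Sum.inl i)]
    rw [Xmat_top c i k']
    apply Finset.sum_congr rfl
    intro j _
    rw [sumAB hσ hω i j]
  · rw [show (∑ c0, ω (Sum.inr j0) c0 *
        (Matrix.of fun c0 k => ∑ j, ω (Sum.inr j) c0 * Xmat ω σ c (Sum.inr j) k) c0 k')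
        = ∑ j, (∑ c0, ω (Sum.inr j0) c0 * ω (Sum.inr j) c0) * Xmat ω σ c (Sum.inr j) k'
        from step (Sum.inr j0)]
    by_cases hM : memM' ω j0
    · rw [Xmat_bot0 c hrow (fun h => JM_M'_disj h hM) k']
      apply Finset.sum_eq_zero
      intro j _
      rw [sumBB hω j0 j]
      split_ifs with h
      · exact absurd hM h.2
      · rw [zero_mul]
    · rw [Finset.sum_eq_single j0]
      · rw [sumBB hω j0 j0, if_pos ⟨rfl, hM⟩, one_mul]
      · intro j _ hne
        rw [sumBB hω j0 j, if_neg (fun h => hne h.1.symm), zero_mul]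
      · exact fun h => absurd (Finset.mem_univ _) h

include hσ in
lemma Xmat_botrow (hω : InT ω) (c : Matrix (Fin q) (Fin p) ℂ)
    (hcol : ∀ i, ¬(memI ω i ∨ memL' ω i) → ∀ j, c j i = 0)
    (j : Fin q) (c0 : Fin r) :
    (∑ k', Xmat ω σ c (Sum.inr j) k' * ω k' c0) = 0 := by
  rw [Fintype.sum_sum_type]
  have e1 : ∀ j' : Fin q, Xmat ω σ c (Sum.inr j) (Sum.inr j') * ω (Sum.inr j') c0
      = ∑ i', -(c j i' * (tauMat ω σ i' j' * ω (Sum.inr j') c0)) := by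
    intro j'
    show (-(c * tauMat ω σ)) j j' * ω (Sum.inr j') c0 = _
    rw [Matrix.neg_apply, Matrix.mul_apply, neg_mul, Finset.sum_mul,
      ← Finset.sum_neg_distrib]
    apply Finset.sum_congr rfl
    intro i' _
    rw [mul_assoc]
  have e2 : ∀ i' : Fin p, (∑ j', -(c j i' * (tauMat ω σ i' j' * ω (Sum.inr j') c0)))
      = -(c j i' * ω (Sum.inl i') c0) := by
    intro i'
    rw [Finset.sum_neg_distrib, ← Finset.mul_sum]
    by_cases hi' : memI ω i' ∨ memL' ω i'
    · rw [← rowT hσ hω hi' c0]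
    · rw [hcol i' hi' j, zero_mul, zero_mul]
  simp_rw [e1]
  rw [Finset.sum_comm]
  simp_rw [e2]
  rw [← Finset.sum_add_distrib]
  apply Finset.sum_eq_zero
  intro i' _
  show c j i' * ω (Sum.inl i') c0 + -(c j i' * ω (Sum.inl i') c0) = 0
  rw [add_neg_cancel]

include hσ in
lemma Xmat_ker (hω : InT ω) (c : Matrix (Fin q) (Fin p) ℂ)
    (hcol : ∀ i, ¬(memI ω i ∨ memL' ω i) → ∀ j, c j i = 0) :
    Xmat ω σ c * ω = 0 := by
  ext k c0
  rw [Matrix.mul_apply, Matrix.zero_apply]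
  rcases k with i | j
  · have : ∀ k', Xmat ω σ c (Sum.inl i) k' * ω k' c0
        = ∑ j, tauMat ω σ i j * (Xmat ω σ c (Sum.inr j) k' * ω k' c0) := by
      intro k'
      rw [Xmat_top c i k', Finset.sum_mul]
      simp_rw [mul_assoc]
    simp_rw [this]
    rw [Finset.sum_comm]
    apply Finset.sum_eq_zero
    intro j _
    rw [← Finset.mul_sum, Xmat_botrow hσ hω c hcol j c0, mul_zero]
  · exact Xmat_botrow hσ hω c hcol j c0

end Aux14e
/-- `η₁` restricts to a linear bijection from `Γ` onto
`C = {c : ∃ a b d, (a b; c d) ∈ D_ω}`, compatible with the products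
`(γς)^ℓ γ ↦ (cτ)^ℓ c`. -/
theorem eta1_bijection (p q r : ℕ) (hr : r ≤ p + q)
    (ω : MatT p q r) (hω : InT ω) (σ : Fin q → Fin p)
    (hσ : ∀ j, memJ ω j → ∃ c, ω (Sum.inl (σ j)) c = 1 ∧ ω (Sum.inr j) c = 1) :
    (∀ γ γ' : Matrix (JUM ω) (IUL' ω) ℂ, eta1 ω (γ + γ') = eta1 ω γ + eta1 ω γ') ∧
    (∀ (z : ℂ) (γ : Matrix (JUM ω) (IUL' ω) ℂ), eta1 ω (z • γ) = z • eta1 ω γ) ∧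
    Set.BijOn (eta1 ω) (GammaSet ω σ)
      {cm : Matrix (Fin q) (Fin p) ℂ |
        ∃ (a : Matrix (Fin p) (Fin p) ℂ) (b : Matrix (Fin p) (Fin q) ℂ)
          (d : Matrix (Fin q) (Fin q) ℂ), Matrix.fromBlocks a b cm d ∈ Dset ω} ∧
    (∀ γ ∈ GammaSet ω σ, ∀ l : ℕ,
      eta1 ω ((γ * sigMat ω σ) ^ l * γ) =
        (eta1 ω γ * tauMat ω σ) ^ l * eta1 ω γ) := by
  refine ⟨?_, ?_, ⟨?_, ?_, ?_⟩, ?_⟩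
  -- additivity
  · intro γ γ'
    ext j i
    rw [Matrix.add_apply]
    by_cases h : (memJ ω j ∨ memM ω j) ∧ (memI ω i ∨ memL' ω i)
    · rw [eta1_pos _ h.1 h.2, eta1_pos _ h.1 h.2, eta1_pos _ h.1 h.2]
      erw [Matrix.add_apply]
    · rw [eta1_neg _ h, eta1_neg _ h, eta1_neg _ h, add_zero]
  -- smul
  · intro z γ
    ext j i
    rw [Matrix.smul_apply]
    by_cases h : (memJ ω j ∨ memM ω j) ∧ (memI ω i ∨ memL' ω i)
    · rw [eta1_pos _ h.1 h.2, eta1_pos _ h.1 h.2]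
      erw [Matrix.smul_apply]
    · rw [eta1_neg _ h, eta1_neg _ h, smul_zero]
  -- MapsTo
  · intro γ hγ
    have hrow : ∀ j, ¬(memJ ω j ∨ memM ω j) → ∀ i, eta1 ω γ j i = 0 :=
      fun j hj i => eta1_neg _ (fun h => hj h.1)
    have hcol : ∀ i, ¬(memI ω i ∨ memL' ω i) → ∀ j, eta1 ω γ j i = 0 :=
      fun i hi j => eta1_neg _ (fun h => hi h.2)
    refine ⟨tauMat ω σ * eta1 ω γ, -(tauMat ω σ * eta1 ω γ * tauMat ω σ),
      -(eta1 ω γ * tauMat ω σ), ?_⟩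
    show Xmat ω σ (eta1 ω γ) ∈ Dset ω
    refine ⟨?_, ?_, ?_, ?_⟩
    · intro i i' hle
      show (tauMat ω σ * eta1 ω γ) i i' = 0
      rw [lemE1 hσ hω γ]
      by_cases h : (memI ω i ∨ memL' ω i) ∧ (memI ω i' ∨ memL' ω i')
      · rw [eta0_pos _ h.1 h.2]
        exact hγ.1 ⟨i, h.1⟩ ⟨i', h.2⟩ hle
      · exact eta0_neg _ h
    · intro j j' hle
      show (-(eta1 ω γ * tauMat ω σ)) j j' = 0
      rw [Matrix.neg_apply, lemE2 hσ hω γ]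
      by_cases h : (memJ ω j ∨ memM ω j) ∧ (memJ ω j' ∨ memM ω j')
      · rw [eta2_pos _ h.1 h.2, hγ.2 ⟨j, h.1⟩ ⟨j', h.2⟩ hle, neg_zero]
      · rw [eta2_neg _ h, neg_zero]
    · obtain ⟨y, hy⟩ := Xmat_range hσ hω (eta1 ω γ) hrow
      rintro v ⟨u, rfl⟩
      refine ⟨y.mulVec u, ?_⟩
      rw [Matrix.mulVecLin_apply, Matrix.mulVecLin_apply, Matrix.mulVec_mulVec, hy]
    · rintro v ⟨u, rfl⟩
      rw [LinearMap.mem_ker, Matrix.mulVecLin_apply, Matrix.mulVecLin_apply,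
        Matrix.mulVec_mulVec, Xmat_ker hσ hω (eta1 ω γ) hcol, Matrix.zero_mulVec]
  -- InjOn
  · intro γ _ γ' _ h
    ext jj ii
    obtain ⟨j, hj⟩ := jj
    obtain ⟨i, hi⟩ := ii
    have h2 := congrFun (congrFun h j) i
    rw [eta1_pos _ hj hi, eta1_pos _ hj hi] at h2
    exact h2
  -- SurjOn
  · intro cm hcm
    obtain ⟨a, b, d, hx⟩ := hcm
    set x := Matrix.fromBlocks a b cm d with hxdef
    have hcol_omega : ∀ c0, (fun k => ω k c0) ∈ colSpace ω := by
      intro c0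
      refine ⟨Pi.single c0 1, ?_⟩
      rw [Matrix.mulVecLin_apply, Matrix.mulVec_single]
      ext k
      simp
    have hxω : x * ω = 0 := by
      ext k c0
      have h0 := hx.2.2.2 (hcol_omega c0)
      rw [LinearMap.mem_ker, Matrix.mulVecLin_apply] at h0
      rw [Matrix.mul_apply, Matrix.zero_apply]
      exact congrFun h0 k
    have hcol_mem : ∀ k', ∃ u, ω.mulVec u = fun k => x k k' := by
      intro k'
      obtain ⟨u, hu⟩ := hx.2.2.1 ⟨Pi.single k' 1, rfl⟩
      refine ⟨u, ?_⟩
      have h2 : x.mulVecLin (Pi.single k' 1) = fun k => x k k' := by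
        rw [Matrix.mulVecLin_apply, Matrix.mulVec_single]
        ext k
        simp
      rw [← h2, ← hu, Matrix.mulVecLin_apply]
    have hM'row : ∀ k' j, memM' ω j → x (Sum.inr j) k' = 0 := by
      intro k' j hM
      obtain ⟨u, hu⟩ := hcol_mem k'
      rw [← congrFun hu (Sum.inr j)]
      show ∑ c0, ω (Sum.inr j) c0 * u c0 = 0
      exact Finset.sum_eq_zero fun c0 _ => by rw [hM c0, zero_mul]
    have hpairRow : ∀ k' j, memJ ω j → x (Sum.inl (σ j)) k' = x (Sum.inr j) k' := by
      intro k' j hJ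
      obtain ⟨u, hu⟩ := hcol_mem k'
      rw [← congrFun hu (Sum.inl (σ j)), ← congrFun hu (Sum.inr j)]
      show ∑ c0, ω (Sum.inl (σ j)) c0 * u c0 = ∑ c0, ω (Sum.inr j) c0 * u c0
      exact Finset.sum_congr rfl fun c0 _ => by rw [pair_col hσ hω hJ c0]
    have hLcol : ∀ i, memL ω i → ∀ k, x k (Sum.inl i) = 0 := by
      intro i hL k
      obtain ⟨c0, hc1, hc0⟩ := hL
      have h1 := congrFun (congrFun hxω k) c0
      rw [Matrix.mul_apply, Matrix.zero_apply, Fintype.sum_sum_type] at h1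
      have e1 : (∑ i' : Fin p, x k (Sum.inl i') * ω (Sum.inl i') c0)
          = x k (Sum.inl i) := by
        rw [Finset.sum_eq_single i]
        · rw [hc1, mul_one]
        · intro i' _ hne
          rw [hc0 (Sum.inl i') (fun h => hne (Sum.inl.inj h)), mul_zero]
        · exact fun h => absurd (Finset.mem_univ _) h
      have e2 : (∑ j' : Fin q, x k (Sum.inr j') * ω (Sum.inr j') c0) = 0 :=
        Finset.sum_eq_zero fun j' _ => by
          rw [hc0 (Sum.inr j') (by simp), mul_zero]
      rw [e1, e2, add_zero] at h1
      exact h1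
    have hJcol : ∀ j', memJ ω j' → ∀ k,
        x k (Sum.inl (σ j')) + x k (Sum.inr j') = 0 := by
      intro j' hJ k
      obtain ⟨c0, hc1, hc2⟩ := hσ j' hJ
      have h1 := congrFun (congrFun hxω k) c0
      rw [Matrix.mul_apply, Matrix.zero_apply, Fintype.sum_sum_type] at h1
      have e1 : (∑ i' : Fin p, x k (Sum.inl i') * ω (Sum.inl i') c0)
          = x k (Sum.inl (σ j')) := by
        rw [Finset.sum_eq_single (σ j')]
        · rw [hc1, mul_one]
        · intro i' _ hne
          rw [top0 hω (fun h => hne (colUL hω h hc1)), mul_zero]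
        · exact fun h => absurd (Finset.mem_univ _) h
      have e2 : (∑ j'' : Fin q, x k (Sum.inr j'') * ω (Sum.inr j'') c0)
          = x k (Sum.inr j') := by
        rw [Finset.sum_eq_single j']
        · rw [hc2, mul_one]
        · intro j'' _ hne
          rw [bot0 hω (fun h => hne (colUR hω h hc2)), mul_zero]
        · exact fun h => absurd (Finset.mem_univ _) h
      rw [e1, e2] at h1
      exact h1
    refine ⟨Matrix.of fun (jj : JUM ω) (ii : IUL' ω) => cm jj.1 ii.1, ⟨?_, ?_⟩, ?_⟩
    · -- first Gamma condition
      rintro ⟨i, hi2⟩ ⟨i', hi2'⟩ hle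
      erw [Matrix.mul_apply]
      rcases hi2 with hiI | hiL'
      · obtain ⟨j0, hj0, hji⟩ := memI_sigma hσ hω hiI
        rw [Finset.sum_eq_single (ι := JUM ω) ⟨j0, Or.inl hj0⟩]
        · rw [show sigMat ω σ ⟨i, Or.inl hiI⟩ ⟨j0, Or.inl hj0⟩ = 1 from
            if_pos ⟨hj0, hji.symm⟩, one_mul]
          show cm j0 i' = 0
          have h3 : cm j0 i' = x (Sum.inr j0) (Sum.inl i') := rfl
          rw [h3, ← hpairRow (Sum.inl i') j0 hj0, hji]
          exact hx.1 i i' hle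
        · intro jj _ hne
          rw [show sigMat ω σ ⟨i, Or.inl hiI⟩ jj = 0 from
            if_neg (fun h => hne (Subtype.ext
              (sigma_inj hσ hω h.1 hj0 (h.2.symm.trans hji.symm)))), zero_mul]
        · exact fun h => absurd (Finset.mem_univ _) h
      · apply Finset.sum_eq_zero
        intro jj _
        rw [show sigMat ω σ ⟨i, Or.inr hiL'⟩ jj = 0 from
          if_neg (fun h => I_L'_disj
            (by rw [show i = σ jj.1 from h.2]; exact sigma_memI hσ h.1) hiL'), zero_mul]
    · -- second Gamma condition
      rintro ⟨j, hj2⟩ ⟨j', hj2'⟩ hle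
      erw [Matrix.mul_apply]
      by_cases hJ' : memJ ω j'
      · have hσI : memI ω (σ j') := sigma_memI hσ hJ'
        rw [Finset.sum_eq_single (ι := IUL' ω) ⟨σ j', Or.inl hσI⟩]
        · rw [show sigMat ω σ ⟨σ j', Or.inl hσI⟩ ⟨j', hj2'⟩ = 1 from
            if_pos ⟨hJ', rfl⟩, mul_one]
          show cm j (σ j') = 0
          have h3 : cm j (σ j') = x (Sum.inr j) (Sum.inl (σ j')) := rfl
          have h4 := hJcol j' hJ' (Sum.inr j)
          have h5 : x (Sum.inr j) (Sum.inr j') = 0 := hx.2.1 j j' hle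
          rw [h3]
          rw [h5, add_zero] at h4
          exact h4
        · intro ii _ hne
          rw [show sigMat ω σ ii ⟨j', hj2'⟩ = 0 from
            if_neg (fun h => hne (Subtype.ext h.2)), mul_zero]
        · exact fun h => absurd (Finset.mem_univ _) h
      · apply Finset.sum_eq_zero
        intro ii _
        rw [show sigMat ω σ ii ⟨j', hj2'⟩ = 0 from
          if_neg (fun h => hJ' h.1), mul_zero]
    · -- eta1 of restriction is cm
      ext j i
      by_cases h : (memJ ω j ∨ memM ω j) ∧ (memI ω i ∨ memL' ω i)
      · rw [eta1_pos _ h.1 h.2]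
        rfl
      · rw [eta1_neg _ h]
        symm
        rcases not_and_or.mp h with hj | hi
        · have hM' : memM' ω j :=
            ((trichoJ hω j).resolve_left (fun hJ => hj (Or.inl hJ))).resolve_left
              (fun hM => hj (Or.inr hM))
          exact hM'row (Sum.inl i) j hM'
        · have hL : memL ω i :=
            ((trichoI hω i).resolve_left (fun hI => hi (Or.inl hI))).resolve_left
              (fun hL' => hi (Or.inr hL'))
          exact hLcol i hL (Sum.inr j)
  -- products
  · intro γ _ l
    induction l with
    | zero => rw [pow_zero, pow_zero, Matrix.one_mul, Matrix.one_mul]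
    | succ l ih =>
      rw [pow_succ', Matrix.mul_assoc, ← lemE3 (γ * sigMat ω σ) ((γ * sigMat ω σ) ^ l * γ),
        ih, ← lemE2 hσ hω γ, pow_succ' (eta1 ω γ * tauMat ω σ)]
      exact (Matrix.mul_assoc _ _ _).symm
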